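/- Fix integers m ≥ 1 and Q ≥ 1. The ℂ-linear span of the Potts vectors v_p, where p ranges over all EVEN set partitions of {1,…,2m}, has dimension Σ_{t=1}^{Q} T(m,t), i.e. the number of even set partitions of {1,…,2m} with at most Q blocks (here T(m,t) = 0 for t > m). -/

import Mathlib

/- Set partitions are modelled as equivalence relations (`Setoid`); `nBlocks` is the
   number of blocks (equivalence classes); a partition is even if every block has even
   cardinality and `T m t` counts even set partitions of a `2*m`-element set into
   exactly `t` blocks.  The Potts vector `potts n Q p` sends a word `w : Fin n → Fin Q`
   to `1` if `w` is constant on every block of `p`, and to `0` otherwise. -/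

open scoped Classical

noncomputable section

def nBlocks {X : Type*} (s : Setoid X) : ℕ := Nat.card (Quotient s)

def IsEvenPartition {X : Type*} (s : Setoid X) : Prop :=
  ∀ x : X, Even (Nat.card {y : X // s.r x y})

def T (m t : ℕ) : ℕ :=
  Nat.card {s : Setoid (Fin (2 * m)) // IsEvenPartition s ∧ nBlocks s = t}

def potts (n Q : ℕ) (p : Setoid (Fin n)) : (Fin n → Fin Q) → ℂ :=
  fun w => if ∀ x y : Fin n, p.r x y → w x = w y then 1 else 0

/-! ### Auxiliary development -/

instance setoidFinite (n : ℕ) : Finite (Setoid (Fin n)) :=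
  Finite.of_injective (fun s => s.r) (fun a b h => by
    cases a; cases b; cases h; rfl)

noncomputable instance setoidFintype (n : ℕ) : Fintype (Setoid (Fin n)) :=
  Fintype.ofFinite _

/-- The indicator vector of words whose kernel is exactly `q`. -/
def Evec (n Q : ℕ) (q : Setoid (Fin n)) : (Fin n → Fin Q) → ℂ :=
  fun w => if Setoid.ker w = q then 1 else 0

variable {n Q : ℕ}

lemma potts_apply (p : Setoid (Fin n)) (w : Fin n → Fin Q) :
    potts n Q p w = if p ≤ Setoid.ker w then 1 else 0 := by
  have hiff : (∀ x y : Fin n, p.r x y → w x = w y) ↔ p ≤ Setoid.ker w := by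
    constructor
    · intro h
      rw [Setoid.le_def]
      intro x y hxy
      exact Setoid.ker_def.mpr (h x y hxy)
    · intro h x y hxy
      exact Setoid.ker_def.mp (Setoid.le_def.mp h hxy)
  show (if ∀ x y : Fin n, p.r x y → w x = w y then (1:ℂ) else 0) = _
  exact if_congr hiff rfl rfl

lemma potts_eq_sum (p : Setoid (Fin n)) :
    potts n Q p = ∑ q ∈ Finset.univ.filter (fun q => p ≤ q), Evec n Q q := by
  funext w
  rw [Finset.sum_apply]
  simp only [Evec]
  rw [Finset.sum_ite_eq]
  simp only [Finset.mem_filter, Finset.mem_univ, true_and]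
  exact potts_apply p w

lemma nBlocks_le_of_ker (w : Fin n → Fin Q) : nBlocks (Setoid.ker w) ≤ Q := by
  unfold nBlocks
  have hinj : Function.Injective
      (Quotient.lift w (fun a b (h : (Setoid.ker w) a b) => h) :
        Quotient (Setoid.ker w) → Fin Q) := by
    intro a b
    induction a using Quotient.ind
    induction b using Quotient.ind
    intro h
    exact Quotient.sound h
  calc Nat.card (Quotient (Setoid.ker w)) ≤ Nat.card (Fin Q) :=
        Nat.card_le_card_of_injective _ hinj
    _ = Q := by simp

lemma Evec_eq_zero (q : Setoid (Fin n)) (h : Q < nBlocks q) : Evec n Q q = 0 := by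
  funext w
  simp only [Evec, Pi.zero_apply]
  rw [if_neg]
  intro hk
  rw [← hk] at h
  exact absurd (nBlocks_le_of_ker w) (not_le.mpr h)

lemma exists_ker (q : Setoid (Fin n)) (h : nBlocks q ≤ Q) :
    ∃ w : Fin n → Fin Q, Setoid.ker w = q := by
  have : Fintype (Quotient q) := Fintype.ofFinite _
  obtain ⟨f⟩ := Function.Embedding.nonempty_of_card_le (α := Quotient q) (β := Fin Q)
    (by
      rw [Fintype.card_fin, ← Nat.card_eq_fintype_card]
      exact h)
  refine ⟨fun x => f (Quotient.mk q x), ?_⟩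
  apply Setoid.ext
  intro x y
  constructor
  · intro h'
    exact Quotient.exact (f.injective h')
  · intro h'
    exact congrArg f (Quotient.sound h')

lemma even_of_le {s t : Setoid (Fin n)} (hs : IsEvenPartition s) (h : s ≤ t) :
    IsEvenPartition t := by
  intro x
  have hcard : Nat.card {y : Fin n // t.r x y}
      = (Finset.univ.filter fun y => t.r x y).card := by
    rw [Nat.card_eq_fintype_card, Fintype.card_subtype]
  rw [hcard,
    Finset.card_eq_sum_card_fiberwise
      (f := fun y => Quotient.mk s y) (t := Finset.univ) (fun _ _ => Finset.mem_univ _)]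
  apply Finset.even_sum
  intro c _
  by_cases hF : (Finset.filter (fun a => Quotient.mk s a = c)
      (Finset.univ.filter fun y => t.r x y)).Nonempty
  · obtain ⟨y₀, hy₀⟩ := hF
    rw [Finset.mem_filter, Finset.mem_filter] at hy₀
    obtain ⟨⟨-, h1⟩, h2⟩ := hy₀
    have hset : Finset.filter (fun a => Quotient.mk s a = c)
        (Finset.univ.filter fun y => t.r x y)
        = Finset.univ.filter (fun y => s.r y₀ y) := by
      ext y
      simp only [Finset.mem_filter, Finset.mem_univ, true_and]
      constructor
      · rintro ⟨-, hy⟩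
        exact Quotient.exact (h2.trans hy.symm)
      · intro hy
        refine ⟨t.trans h1 (Setoid.le_def.mp h hy), ?_⟩
        rw [← h2]
        exact Quotient.sound (s.symm hy)
    rw [hset]
    have := hs y₀
    rwa [Nat.card_eq_fintype_card, Fintype.card_subtype] at this
  · rw [Finset.not_nonempty_iff_eq_empty.mp hF]
    simp

lemma Evec_mem_span (q : Setoid (Fin n)) (hq : IsEvenPartition q) :
    Evec n Q q ∈ Submodule.span ℂ
      (Set.range fun p : {s : Setoid (Fin n) // IsEvenPartition s} => potts n Q p.1) := by
  induction q using WellFoundedGT.induction with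
  | _ q IH =>
    have hsplit : Finset.univ.filter (fun r => q ≤ r)
        = insert q (Finset.univ.filter (fun r => q < r)) := by
      ext r
      simp only [Finset.mem_filter, Finset.mem_univ, true_and, Finset.mem_insert]
      rw [le_iff_lt_or_eq]
      constructor
      · rintro (h | h)
        · exact Or.inr h
        · exact Or.inl h.symm
      · rintro (h | h)
        · exact Or.inr h.symm
        · exact Or.inl h
    have hE : Evec n Q q = potts n Q q
        - ∑ r ∈ Finset.univ.filter (fun r => q < r), Evec n Q r := by
      rw [potts_eq_sum, hsplit, Finset.sum_insert (by simp)]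
      abel
    rw [hE]
    apply Submodule.sub_mem
    · exact Submodule.subset_span ⟨⟨q, hq⟩, rfl⟩
    · apply Submodule.sum_mem
      intro r hr
      have hlt : q < r := (Finset.mem_filter.mp hr).2
      exact IH r hlt (even_of_le hq hlt.le)

lemma span_eq :
    Submodule.span ℂ
      (Set.range fun p : {s : Setoid (Fin n) // IsEvenPartition s} => potts n Q p.1)
    = Submodule.span ℂ
      (Set.range fun q : {s : Setoid (Fin n) // IsEvenPartition s ∧ nBlocks s ≤ Q} =>
        Evec n Q q.1) := by
  apply le_antisymm
  · rw [Submodule.span_le]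
    rintro _ ⟨⟨p, hp⟩, rfl⟩
    simp only [SetLike.mem_coe]
    show potts n Q p ∈ _
    rw [potts_eq_sum]
    apply Submodule.sum_mem
    intro r hr
    have hle : p ≤ r := (Finset.mem_filter.mp hr).2
    have hr_even : IsEvenPartition r := even_of_le hp hle
    by_cases hcard : nBlocks r ≤ Q
    · exact Submodule.subset_span ⟨⟨r, hr_even, hcard⟩, rfl⟩
    · rw [Evec_eq_zero r (not_le.mp hcard)]
      exact Submodule.zero_mem _
  · rw [Submodule.span_le]
    rintro _ ⟨⟨q, hq, -⟩, rfl⟩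
    simp only [SetLike.mem_coe]
    exact Evec_mem_span q hq

lemma Evec_li :
    LinearIndependent ℂ
      (fun q : {s : Setoid (Fin n) // IsEvenPartition s ∧ nBlocks s ≤ Q} =>
        Evec n Q q.1) := by
  rw [linearIndependent_iff']
  intro s g hsum i hi
  obtain ⟨w, hw⟩ := exists_ker i.1 i.2.2
  have hval := congrFun hsum w
  rw [Finset.sum_apply] at hval
  have hsum' : ∑ j ∈ s, (g j • Evec n Q j.1) w = g i := by
    rw [Finset.sum_eq_single i]
    · simp [Evec, hw]
    · intro j _ hne
      have : Setoid.ker w ≠ j.1 := by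
        rw [hw]
        intro heq
        exact hne (Subtype.ext heq.symm)
      simp [Evec, this]
    · intro h
      exact absurd hi h
  rw [hsum'] at hval
  exact hval

lemma card_even_le (hn : 0 < n) :
    Fintype.card {s : Setoid (Fin n) // IsEvenPartition s ∧ nBlocks s ≤ Q}
      = ∑ t ∈ Finset.Icc 1 Q,
          Nat.card {s : Setoid (Fin n) // IsEvenPartition s ∧ nBlocks s = t} := by
  have hne : Nonempty (Fin n) := ⟨⟨0, hn⟩⟩
  rw [Fintype.card_subtype]
  rw [Finset.card_eq_sum_card_fiberwise (f := nBlocks) (t := Finset.Icc 1 Q)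
    (fun q hq => by
      rw [Finset.mem_coe, Finset.mem_filter] at hq
      rw [Finset.mem_coe]
      refine Finset.mem_Icc.mpr ⟨?_, hq.2.2⟩
      haveI : Nonempty (Quotient q) := ⟨Quotient.mk q ⟨0, hn⟩⟩
      exact Nat.card_pos)]
  refine Finset.sum_congr rfl (fun t ht => ?_)
  rw [Nat.card_eq_fintype_card, Fintype.card_subtype]
  congr 1
  ext q
  simp only [Finset.mem_filter, Finset.mem_univ, true_and]
  have htQ : t ≤ Q := (Finset.mem_Icc.mp ht).2
  constructor
  · rintro ⟨⟨he, -⟩, hb⟩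
    exact ⟨he, hb⟩
  · rintro ⟨he, hb⟩
    exact ⟨⟨he, hb ▸ htQ⟩, hb⟩

theorem even_potts_span_finrank (m Q : ℕ) (hm : 1 ≤ m) (hQ : 1 ≤ Q) :
    Module.finrank ℂ (Submodule.span ℂ
        (Set.range fun p : {s : Setoid (Fin (2 * m)) // IsEvenPartition s} =>
          potts (2 * m) Q p.1))
      = ∑ t ∈ Finset.Icc 1 Q, T m t := by
  rw [span_eq, finrank_span_eq_card Evec_li, card_even_le (by omega)]
  rfl

end
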